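/- Impossibility theorem, part 1 (Features 1 and 2 exclude Feature 3): Let H_W and H_S be Hermitian matrices on ℂ^{d_W} and ℂ^{d_S}, kT > 0, and let {φ_x}_{x∈X} (|X| = d_S) be an orthonormal basis of ℂ^{d_S} consisting of eigenvectors of H_S (the post-measurement states of a repeatable, energy-conserving measurement). For each x ∈ X let U_x be a unitary on ℂ^{d_W} ⊗ ℂ^{d_S} with [U_x, H_W ⊗ 1 + 1 ⊗ H_S] = 0, let ρ_W be a density matrix on ℂ^{d_W}, set ρ'_{W,x} := tr₂[U_x(ρ_W ⊗ |φ_x⟩⟨φ_x|)U_x†] and W_x := F_{H_W}(ρ'_{W,x}) − F_{H_W}(ρ_W). If S(ρ'_{W,x}) = S(ρ_W) for all x ∈ X, then there exists x ∈ X with W_x ≤ 0. -/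

import Mathlib

open Matrix
open scoped Kronecker Matrix ComplexOrder

noncomputable section

/-- A density matrix: positive semidefinite with unit trace. -/
def IsDensityMatrix {n : Type*} [Fintype n] (ρ : Matrix n n ℂ) : Prop :=
  ρ.PosSemidef ∧ ρ.trace = 1

/-- von Neumann entropy `S(ρ) = -∑ λᵢ log λᵢ` (junk value 0 if not Hermitian). -/
noncomputable def vnEntropy {n : Type*} [Fintype n] [DecidableEq n]
    (ρ : Matrix n n ℂ) : ℝ :=
  if h : ρ.IsHermitian then -∑ i, (h.eigenvalues i) * Real.log (h.eigenvalues i) else 0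

/-- Non-equilibrium free energy `F(ρ) = tr(Hρ) - kT S(ρ)`. -/
noncomputable def freeEnergy {n : Type*} [Fintype n] [DecidableEq n]
    (kT : ℝ) (H ρ : Matrix n n ℂ) : ℝ :=
  (Matrix.trace (H * ρ)).re - kT * vnEntropy ρ

/-- Least eigenvalue of a Hermitian matrix (junk value 0 if not Hermitian). -/
noncomputable def lambdaMin {n : Type*} [Fintype n] [DecidableEq n]
    (H : Matrix n n ℂ) : ℝ :=
  if h : H.IsHermitian then ⨅ i, h.eigenvalues i else 0

/-- Partial trace over the second tensor factor. -/
def ptrace2 {m n : Type*} [Fintype n]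
    (σ : Matrix (m × n) (m × n) ℂ) : Matrix m m ℂ :=
  fun i j => ∑ k, σ (i, k) (j, k)

/-- Partial trace over the first tensor factor. -/
def ptrace1 {m n : Type*} [Fintype m]
    (σ : Matrix (m × n) (m × n) ℂ) : Matrix n n ℂ :=
  fun k l => ∑ i, σ (i, k) (i, l)

/-- Outer product `|v⟩⟨v|`. -/
def outer {n : Type*} (v : n → ℂ) : Matrix n n ℂ :=
  Matrix.vecMulVec v (star v)

/-- Kronecker product of vectors. -/
def kronVec {m n : Type*} (v : m → ℂ) (w : n → ℂ) : m × n → ℂ :=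
  fun p => v p.1 * w p.2

section Aux

variable {m n : Type*} [Fintype m] [Fintype n] [DecidableEq m] [DecidableEq n]

lemma my_trace_kron_one_mul (A : Matrix m m ℂ) (σ : Matrix (m × n) (m × n) ℂ) :
    Matrix.trace ((A ⊗ₖ (1 : Matrix n n ℂ)) * σ) = Matrix.trace (A * ptrace2 σ) := by
  simp only [Matrix.trace, Matrix.diag, Matrix.mul_apply, ptrace2, Matrix.kroneckerMap_apply,
    Matrix.one_apply, Fintype.sum_prod_type, mul_ite, mul_one, mul_zero, ite_mul, zero_mul,
    Finset.sum_ite_eq, Finset.sum_ite_eq', Finset.mem_univ, if_true, Finset.mul_sum]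
  exact Finset.sum_congr rfl fun i _ => Finset.sum_comm

lemma my_trace_one_kron_mul (B : Matrix n n ℂ) (σ : Matrix (m × n) (m × n) ℂ) :
    Matrix.trace (((1 : Matrix m m ℂ) ⊗ₖ B) * σ) = Matrix.trace (B * ptrace1 σ) := by
  have h1 : Matrix.trace (((1 : Matrix m m ℂ) ⊗ₖ B) * σ)
      = ∑ i : m, ∑ k : n, ∑ l : n, B k l * σ (i, l) (i, k) := by
    simp only [Matrix.trace, Matrix.diag, Matrix.mul_apply, Matrix.kroneckerMap_apply,
      Fintype.sum_prod_type, Matrix.one_apply, ite_mul, one_mul, zero_mul]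
    refine Finset.sum_congr rfl fun i _ => Finset.sum_congr rfl fun k _ => ?_
    rw [Finset.sum_comm]
    simp [Finset.sum_ite_eq]
  have h2 : Matrix.trace (B * ptrace1 σ) = ∑ k, ∑ l, B k l * ∑ i, σ (i, l) (i, k) := by
    simp [Matrix.trace, Matrix.diag, Matrix.mul_apply, ptrace1]
  rw [h1, h2, Finset.sum_comm]
  refine Finset.sum_congr rfl fun k _ => ?_
  rw [Finset.sum_comm]
  simp [Finset.mul_sum]

lemma my_trace_ptrace1 (σ : Matrix (m × n) (m × n) ℂ) : (ptrace1 σ).trace = σ.trace := by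
  rw [Matrix.trace, Matrix.trace, Fintype.sum_prod_type]
  simp only [Matrix.diag, ptrace1]
  exact Finset.sum_comm

lemma my_kron_conjTranspose (A : Matrix m m ℂ) (B : Matrix n n ℂ) :
    (A ⊗ₖ B)ᴴ = Aᴴ ⊗ₖ Bᴴ := by
  ext ⟨i, k⟩ ⟨j, l⟩
  simp [Matrix.conjTranspose_apply, Matrix.kroneckerMap_apply]

lemma my_kron_posSemidef {A : Matrix m m ℂ} {B : Matrix n n ℂ}
    (hA : A.PosSemidef) (hB : B.PosSemidef) : (A ⊗ₖ B).PosSemidef := by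
  exact hA.kronecker hB

lemma my_outer_posSemidef (v : n → ℂ) : (outer v).PosSemidef := by
  have : outer v = (Matrix.replicateCol Unit v) * (Matrix.replicateCol Unit v)ᴴ := by
    rw [Matrix.conjTranspose_replicateCol, outer, Matrix.vecMulVec_eq Unit]
  rw [this]
  exact Matrix.posSemidef_self_mul_conjTranspose _

lemma my_trace_outer (v : n → ℂ) : (outer v).trace = star v ⬝ᵥ v := by
  simp [outer, Matrix.trace, Matrix.diag, Matrix.vecMulVec_apply, dotProduct, mul_comm]

lemma my_trace_mul_outer (A : Matrix n n ℂ) (v : n → ℂ) :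
    (A * outer v).trace = star v ⬝ᵥ A.mulVec v := by
  simp only [Matrix.trace, Matrix.diag, Matrix.mul_apply, outer, Matrix.vecMulVec_apply,
    dotProduct, Matrix.mulVec, Pi.star_apply, Finset.mul_sum]
  refine Finset.sum_congr rfl fun i _ => Finset.sum_congr rfl fun j _ => ?_
  ring

/-- Quadratic form of the partial trace as a sum of quadratic forms. -/
lemma my_ptrace1_form (σ : Matrix (m × n) (m × n) ℂ) (v : n → ℂ) :
    star v ⬝ᵥ (ptrace1 σ).mulVec v
      = ∑ i : m, star (kronVec (Pi.single i 1) v) ⬝ᵥ σ.mulVec (kronVec (Pi.single i 1) v) := by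
  have : ∀ i : m,
      star (kronVec (Pi.single i 1) v) ⬝ᵥ σ.mulVec (kronVec (Pi.single i 1) v)
        = ∑ k : n, ∑ l : n, star (v k) * σ (i, k) (i, l) * v l := by
    intro i
    have hw : ∀ (j : m) (k : n), kronVec (Pi.single i 1) v (j, k) = if j = i then v k else 0 := by
      intro j k; simp [kronVec, Pi.single_apply, ite_mul]
    simp only [dotProduct, Fintype.sum_prod_type, Pi.star_apply, hw]
    rw [Finset.sum_eq_single i (fun b _ hb => by simp [hb]) (by simp)]
    simp only [if_pos rfl]
    refine Finset.sum_congr rfl fun k _ => ?_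
    have hmv : ∀ k : n, σ.mulVec (kronVec (Pi.single i 1) v) (i, k)
        = ∑ l : n, σ (i, k) (i, l) * v l := by
      intro k
      simp only [Matrix.mulVec, dotProduct, Fintype.sum_prod_type, hw]
      rw [Finset.sum_eq_single i (fun b _ hb => by simp [hb]) (by simp)]
      simp
    rw [hmv, Finset.mul_sum]
    refine Finset.sum_congr rfl fun l _ => ?_
    simp only [if_true]
    ring
  simp only [this]
  rw [show (∑ i : m, ∑ k : n, ∑ l : n, star (v k) * σ (i, k) (i, l) * v l)
      = ∑ k : n, ∑ i : m, ∑ l : n, star (v k) * σ (i, k) (i, l) * v l from Finset.sum_comm]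
  simp only [dotProduct, Matrix.mulVec, ptrace1, Pi.star_apply, Finset.mul_sum, Finset.sum_mul]
  refine Finset.sum_congr rfl fun k _ => ?_
  rw [Finset.sum_comm]
  refine Finset.sum_congr rfl fun i _ => Finset.sum_congr rfl fun l _ => ?_
  ring

/-- Trace as a sum of diagonal elements in an orthonormal basis. -/
lemma my_trace_eq_sum_onb {dS : ℕ} {X : Type*} [Fintype X] [DecidableEq X]
    (hcard : Fintype.card X = dS) (φ : X → (Fin dS → ℂ))
    (hφON : ∀ x y, star (φ x) ⬝ᵥ φ y = if x = y then 1 else 0)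
    (M : Matrix (Fin dS) (Fin dS) ℂ) :
    M.trace = ∑ x, star (φ x) ⬝ᵥ M.mulVec (φ x) := by
  classical
  let e : X ≃ Fin dS := Fintype.equivFinOfCardEq hcard
  let V : Matrix (Fin dS) (Fin dS) ℂ := Matrix.of fun i j => φ (e.symm j) i
  have hV : Vᴴ * V = 1 := by
    ext j j'
    have h := hφON (e.symm j) (e.symm j')
    simp only [dotProduct, Pi.star_apply] at h
    simp only [Matrix.mul_apply, Matrix.conjTranspose_apply, V, Matrix.of_apply,
      Matrix.one_apply, h]
    simp [Equiv.symm_apply_eq]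
  have hV' : V * Vᴴ = 1 := mul_eq_one_comm.mp hV
  have step1 : (Vᴴ * M * V).trace = M.trace := by
    rw [Matrix.trace_mul_cycle, hV', Matrix.one_mul]
  rw [← step1]
  have step2 : (Vᴴ * M * V).trace
      = ∑ j, star (φ (e.symm j)) ⬝ᵥ M.mulVec (φ (e.symm j)) := by
    refine Finset.sum_congr rfl fun j _ => ?_
    simp only [Matrix.diag, Matrix.mul_apply, Matrix.conjTranspose_apply, V, Matrix.of_apply,
      dotProduct, Matrix.mulVec, Pi.star_apply, Finset.mul_sum, Finset.sum_mul]
    rw [Finset.sum_comm]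
    refine Finset.sum_congr rfl fun i _ => Finset.sum_congr rfl fun k _ => ?_
    ring
  rw [step2]
  exact Fintype.sum_equiv e.symm _ _ fun j => rfl

end Aux

/-- Impossibility theorem, part 1: repeatable measurement (Feature 1) plus
invariant weight entropy (Feature 2) preclude strictly positive work extraction
for all outcomes (Feature 3). -/
theorem features_one_two_exclude_three
    {dW dS : ℕ} {X : Type*} [Fintype X] [DecidableEq X]
    (hdS : 0 < dS)
    (HW : Matrix (Fin dW) (Fin dW) ℂ) (HS : Matrix (Fin dS) (Fin dS) ℂ)
    (hHW : HW.IsHermitian) (hHS : HS.IsHermitian)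
    (kT : ℝ) (hkT : 0 < kT)
    (φ : X → (Fin dS → ℂ))
    (hcard : Fintype.card X = dS)
    (hφON : ∀ x y, star (φ x) ⬝ᵥ φ y = if x = y then 1 else 0)
    (hφeig : ∀ x, ∃ μ : ℝ, HS.mulVec (φ x) = (μ : ℂ) • φ x)
    (U : X → Matrix (Fin dW × Fin dS) (Fin dW × Fin dS) ℂ)
    (hU : ∀ x, U x ∈ Matrix.unitaryGroup (Fin dW × Fin dS) ℂ)
    (hUcomm : ∀ x, U x * (HW ⊗ₖ (1 : Matrix (Fin dS) (Fin dS) ℂ)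
        + (1 : Matrix (Fin dW) (Fin dW) ℂ) ⊗ₖ HS)
      = (HW ⊗ₖ (1 : Matrix (Fin dS) (Fin dS) ℂ)
        + (1 : Matrix (Fin dW) (Fin dW) ℂ) ⊗ₖ HS) * U x)
    (ρW : Matrix (Fin dW) (Fin dW) ℂ) (hρW : IsDensityMatrix ρW)
    (hS : ∀ x, vnEntropy (ptrace2 (U x * (ρW ⊗ₖ outer (φ x)) * (U x)ᴴ))
        = vnEntropy ρW) :
    ∃ x, freeEnergy kT HW (ptrace2 (U x * (ρW ⊗ₖ outer (φ x)) * (U x)ᴴ))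
        - freeEnergy kT HW ρW ≤ 0 := by
  classical
  choose μ hμ using hφeig
  have hXne : Nonempty X := Fintype.card_pos_iff.mp (by rw [hcard]; exact hdS)
  obtain ⟨x0, -, hx0⟩ := Finset.exists_min_image (Finset.univ : Finset X) μ
    ⟨Classical.arbitrary X, Finset.mem_univ _⟩
  refine ⟨x0, ?_⟩
  have hSx := hS x0
  set P := outer (φ x0) with hP
  set σ := ρW ⊗ₖ P with hσdef
  set σ' := U x0 * σ * (U x0)ᴴ with hσ'
  set ρ' := ptrace2 σ' with hρ'
  set τ := ptrace1 σ' with hτ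
  set E := HW ⊗ₖ (1 : Matrix (Fin dS) (Fin dS) ℂ)
    + (1 : Matrix (Fin dW) (Fin dW) ℂ) ⊗ₖ HS with hE
  have hU1 : (U x0)ᴴ * U x0 = 1 := by
    have h := (hU x0).1
    rwa [Matrix.star_eq_conjTranspose] at h
  have hφ1 : star (φ x0) ⬝ᵥ φ x0 = 1 := by simpa using hφON x0 x0
  have htrP : P.trace = 1 := by rw [hP, my_trace_outer, hφ1]
  have htrσ : σ.trace = 1 := by rw [hσdef, Matrix.trace_kronecker, hρW.2, htrP, one_mul]
  have htrσ' : σ'.trace = 1 := by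
    rw [hσ', Matrix.trace_mul_cycle, hU1, Matrix.one_mul, htrσ]
  have htrτ : τ.trace = 1 := by rw [hτ, my_trace_ptrace1, htrσ']
  have hσPSD : σ.PosSemidef := my_kron_posSemidef hρW.1 (my_outer_posSemidef _)
  have hσ'PSD : σ'.PosSemidef := hσPSD.mul_mul_conjTranspose_same (U x0)
  set c : X → ℂ := fun x => star (φ x) ⬝ᵥ τ.mulVec (φ x) with hc
  have hc_nonneg : ∀ x, 0 ≤ c x := by
    intro x
    rw [hc]
    simp only [hτ]
    rw [my_ptrace1_form]
    exact Finset.sum_nonneg fun i _ => hσ'PSD.dotProduct_mulVec_nonneg _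
  have hcsum : ∑ x, c x = 1 := by
    rw [← htrτ, my_trace_eq_sum_onb hcard φ hφON τ]
  have him : ∀ x, (c x).im = 0 := fun x => by
    have h := (Complex.le_def.mp (hc_nonneg x)).2; simpa using h.symm
  have hre_nonneg : ∀ x, 0 ≤ (c x).re := fun x => by
    have h := (Complex.le_def.mp (hc_nonneg x)).1; simpa using h
  have hsumre : ∑ x, (c x).re = 1 := by
    have h := congrArg Complex.re hcsum
    simpa [Complex.re_sum] using h
  have hHSτ : (HS * τ).trace = ∑ x, (μ x : ℂ) * c x := by
    rw [my_trace_eq_sum_onb hcard φ hφON]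
    refine Finset.sum_congr rfl fun x _ => ?_
    rw [← Matrix.mulVec_mulVec, Matrix.dotProduct_mulVec]
    have hvm : Matrix.vecMul (star (φ x)) HS = (μ x : ℂ) • star (φ x) := by
      have h1 := Matrix.star_mulVec (M := HS) (v := φ x)
      rw [hHS.eq] at h1
      rw [← h1, hμ x]
      simp [star_smul]
    rw [hvm, smul_dotProduct]
    simp [hc, smul_eq_mul]
  have hbound : μ x0 ≤ ((HS * τ).trace).re := by
    rw [hHSτ, Complex.re_sum]
    have hterm : ∀ x, ((μ x : ℂ) * c x).re = μ x * (c x).re := fun x => by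
      rw [Complex.mul_re]; simp [him x]
    calc μ x0 = ∑ x, μ x0 * (c x).re := by rw [← Finset.mul_sum, hsumre, mul_one]
      _ ≤ ∑ x, μ x * (c x).re := Finset.sum_le_sum fun x _ =>
          mul_le_mul_of_nonneg_right (hx0 x (Finset.mem_univ x)) (hre_nonneg x)
      _ = ∑ x, ((μ x : ℂ) * c x).re := Finset.sum_congr rfl fun x _ => (hterm x).symm
  have hEcon : (E * σ').trace = (E * σ).trace := by
    rw [hσ', ← Matrix.mul_assoc, ← Matrix.mul_assoc, ← hUcomm x0, Matrix.trace_mul_cycle,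
      ← Matrix.mul_assoc (U x0)ᴴ (U x0) E, hU1, Matrix.one_mul]
  have hdec1 : (E * σ').trace = (HW * ρ').trace + (HS * τ).trace := by
    rw [hE, Matrix.add_mul, Matrix.trace_add, my_trace_kron_one_mul, my_trace_one_kron_mul,
      ← hρ', ← hτ]
  have hdec2 : (E * σ).trace = (HW * ρW).trace + (μ x0 : ℂ) := by
    rw [hE, Matrix.add_mul, Matrix.trace_add]
    have e1 : ((HW ⊗ₖ (1 : Matrix (Fin dS) (Fin dS) ℂ)) * σ).trace = (HW * ρW).trace := by
      rw [hσdef, ← Matrix.mul_kronecker_mul, Matrix.trace_kronecker, Matrix.one_mul, htrP,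
        mul_one]
    have e2 : (((1 : Matrix (Fin dW) (Fin dW) ℂ) ⊗ₖ HS) * σ).trace = (μ x0 : ℂ) := by
      rw [hσdef, ← Matrix.mul_kronecker_mul, Matrix.trace_kronecker, Matrix.one_mul, hρW.2,
        one_mul, hP, my_trace_mul_outer, hμ x0]
      simp [dotProduct_smul, hφ1]
    rw [e1, e2]
  have hkey : (HW * ρ').trace + (HS * τ).trace = (HW * ρW).trace + (μ x0 : ℂ) := by
    rw [← hdec1, ← hdec2, hEcon]
  have hrekey : ((HW * ρ').trace).re + ((HS * τ).trace).re
      = ((HW * ρW).trace).re + μ x0 := by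
    have h := congrArg Complex.re hkey
    simpa [Complex.add_re] using h
  have hfe : freeEnergy kT HW ρ' - freeEnergy kT HW ρW
      = ((HW * ρ').trace).re - ((HW * ρW).trace).re := by
    simp only [freeEnergy, hSx]
    ring
  rw [hfe]
  linarith
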